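/- Let a, b, c ∈ ℂ with a = b + c, and let P_{ij} be the cubic Sklyanin structure functions on ℂ⁴: P(s_0,s_1) = −2b s_0 s_2 s_3, P(s_0,s_2) = 2a s_0 s_1 s_3, P(s_0,s_3) = −2c s_0 s_1 s_2, P(s_1,s_2) = s_3 (a s_1² + b s_2² − s_0²), P(s_1,s_3) = s_2 (s_0² − c s_1² + b s_3²), P(s_2,s_3) = −s_1 (s_0² + c s_2² + a s_3²) (extended antisymmetrically). Set N = s_0² + a s_1² + b s_2² and D = s_1² + s_2² + s_3². Then both rational functions N/D and D/s_0 are Casimirs of the cubic bracket in the cleared-denominator sense: for every index i ∈ {0,1,2,3} and every point p ∈ ℂ⁴, Σ_{l=0}^{3} [ (∂N/∂s_l)(p) D(p) − N(p) (∂D/∂s_l)(p) ] P_{li}(p) = 0 and Σ_{l=0}^{3} [ (∂D/∂s_l)(p) s_0 − D(p) (∂s_0/∂s_l) ] P_{li}(p) = 0. -/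
import Mathlib


open BigOperators

noncomputable section

/-- Partial derivative of `f : ℂⁿ → ℂ` in the `l`-th coordinate at the point `p`. -/
def pderiv' {n : ℕ} (l : Fin n) (f : (Fin n → ℂ) → ℂ) (p : Fin n → ℂ) : ℂ :=
  deriv (fun t => f (Function.update p l t)) (p l)

/-- Antisymmetric structure functions of the cubic Sklyanin bracket on ℂ⁴,
coordinates `s₀, s₁, s₂, s₃`. -/
def Pcub (a b c : ℂ) (i j : Fin 4) (s : Fin 4 → ℂ) : ℂ :=
  !![0,
     -2 * b * s 0 * s 2 * s 3,
     2 * a * s 0 * s 1 * s 3,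
     -2 * c * s 0 * s 1 * s 2;
     2 * b * s 0 * s 2 * s 3,
     0,
     s 3 * (a * (s 1) ^ 2 + b * (s 2) ^ 2 - (s 0) ^ 2),
     s 2 * ((s 0) ^ 2 - c * (s 1) ^ 2 + b * (s 3) ^ 2);
     -2 * a * s 0 * s 1 * s 3,
     -(s 3 * (a * (s 1) ^ 2 + b * (s 2) ^ 2 - (s 0) ^ 2)),
     0,
     -(s 1 * ((s 0) ^ 2 + c * (s 2) ^ 2 + a * (s 3) ^ 2));
     2 * c * s 0 * s 1 * s 2,
     -(s 2 * ((s 0) ^ 2 - c * (s 1) ^ 2 + b * (s 3) ^ 2)),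
     s 1 * ((s 0) ^ 2 + c * (s 2) ^ 2 + a * (s 3) ^ 2),
     0] i j

/-- `N = s₀² + a s₁² + b s₂²`. -/
def Npoly (a b : ℂ) (s : Fin 4 → ℂ) : ℂ := (s 0) ^ 2 + a * (s 1) ^ 2 + b * (s 2) ^ 2

/-- `D = s₁² + s₂² + s₃²`. -/
def Dpoly (s : Fin 4 → ℂ) : ℂ := (s 1) ^ 2 + (s 2) ^ 2 + (s 3) ^ 2

/- ### Auxiliary lemmas: partial derivatives -/

lemma pN0' (a b : ℂ) (p : Fin 4 → ℂ) : pderiv' 0 (Npoly a b) p = 2 * p 0 := by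
  simp [pderiv', Npoly, Function.update]
lemma pN1' (a b : ℂ) (p : Fin 4 → ℂ) : pderiv' 1 (Npoly a b) p = 2 * a * p 1 := by
  simp [pderiv', Npoly, Function.update]; ring
lemma pN2' (a b : ℂ) (p : Fin 4 → ℂ) : pderiv' 2 (Npoly a b) p = 2 * b * p 2 := by
  simp [pderiv', Npoly, Function.update]; ring
lemma pN3' (a b : ℂ) (p : Fin 4 → ℂ) : pderiv' 3 (Npoly a b) p = 0 := by
  simp [pderiv', Npoly, Function.update]
lemma pD0' (p : Fin 4 → ℂ) : pderiv' 0 Dpoly p = 0 := by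
  simp [pderiv', Dpoly, Function.update]
lemma pD1' (p : Fin 4 → ℂ) : pderiv' 1 Dpoly p = 2 * p 1 := by
  simp [pderiv', Dpoly, Function.update]
lemma pD2' (p : Fin 4 → ℂ) : pderiv' 2 Dpoly p = 2 * p 2 := by
  simp [pderiv', Dpoly, Function.update]
lemma pD3' (p : Fin 4 → ℂ) : pderiv' 3 Dpoly p = 2 * p 3 := by
  simp [pderiv', Dpoly, Function.update]
lemma pC0' (p : Fin 4 → ℂ) : pderiv' 0 (fun q : Fin 4 → ℂ => q 0) p = 1 := by
  simp [pderiv', Function.update]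
lemma pC1' (p : Fin 4 → ℂ) : pderiv' 1 (fun q : Fin 4 → ℂ => q 0) p = 0 := by
  simp [pderiv', Function.update]
lemma pC2' (p : Fin 4 → ℂ) : pderiv' 2 (fun q : Fin 4 → ℂ => q 0) p = 0 := by
  simp [pderiv', Function.update]
lemma pC3' (p : Fin 4 → ℂ) : pderiv' 3 (fun q : Fin 4 → ℂ => q 0) p = 0 := by
  simp [pderiv', Function.update]

/- ### Auxiliary lemmas: matrix entries -/

lemma P00 (a b c : ℂ) (p : Fin 4 → ℂ) : Pcub a b c 0 0 p = 0 := rfl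
lemma P01 (a b c : ℂ) (p : Fin 4 → ℂ) : Pcub a b c 0 1 p = -2 * b * p 0 * p 2 * p 3 := rfl
lemma P02 (a b c : ℂ) (p : Fin 4 → ℂ) : Pcub a b c 0 2 p = 2 * a * p 0 * p 1 * p 3 := rfl
lemma P03 (a b c : ℂ) (p : Fin 4 → ℂ) : Pcub a b c 0 3 p = -2 * c * p 0 * p 1 * p 2 := rfl
lemma P10 (a b c : ℂ) (p : Fin 4 → ℂ) : Pcub a b c 1 0 p = 2 * b * p 0 * p 2 * p 3 := rfl
lemma P11 (a b c : ℂ) (p : Fin 4 → ℂ) : Pcub a b c 1 1 p = 0 := rfl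
lemma P12 (a b c : ℂ) (p : Fin 4 → ℂ) :
    Pcub a b c 1 2 p = p 3 * (a * (p 1) ^ 2 + b * (p 2) ^ 2 - (p 0) ^ 2) := rfl
lemma P13 (a b c : ℂ) (p : Fin 4 → ℂ) :
    Pcub a b c 1 3 p = p 2 * ((p 0) ^ 2 - c * (p 1) ^ 2 + b * (p 3) ^ 2) := rfl
lemma P20 (a b c : ℂ) (p : Fin 4 → ℂ) : Pcub a b c 2 0 p = -2 * a * p 0 * p 1 * p 3 := rfl
lemma P21 (a b c : ℂ) (p : Fin 4 → ℂ) :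
    Pcub a b c 2 1 p = -(p 3 * (a * (p 1) ^ 2 + b * (p 2) ^ 2 - (p 0) ^ 2)) := rfl
lemma P22 (a b c : ℂ) (p : Fin 4 → ℂ) : Pcub a b c 2 2 p = 0 := rfl
lemma P23 (a b c : ℂ) (p : Fin 4 → ℂ) :
    Pcub a b c 2 3 p = -(p 1 * ((p 0) ^ 2 + c * (p 2) ^ 2 + a * (p 3) ^ 2)) := rfl
lemma P30 (a b c : ℂ) (p : Fin 4 → ℂ) : Pcub a b c 3 0 p = 2 * c * p 0 * p 1 * p 2 := rfl
lemma P31 (a b c : ℂ) (p : Fin 4 → ℂ) :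
    Pcub a b c 3 1 p = -(p 2 * ((p 0) ^ 2 - c * (p 1) ^ 2 + b * (p 3) ^ 2)) := rfl
lemma P32 (a b c : ℂ) (p : Fin 4 → ℂ) :
    Pcub a b c 3 2 p = p 1 * ((p 0) ^ 2 + c * (p 2) ^ 2 + a * (p 3) ^ 2) := rfl
lemma P33 (a b c : ℂ) (p : Fin 4 → ℂ) : Pcub a b c 3 3 p = 0 := rfl


lemma left0 (b c : ℂ) (p : Fin 4 → ℂ) :
    ∑ l : Fin 4,
      (pderiv' l (Npoly (b + c) b) p * Dpoly p - Npoly (b + c) b p * pderiv' l Dpoly p) *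
        Pcub (b + c) b c l 0 p = 0 := by
  rw [Fin.sum_univ_four]
  simp only [pN0', pN1', pN2', pN3', pD0', pD1', pD2', pD3', Npoly, Dpoly,
    P00, P10, P20, P30]
  ring

lemma right0 (b c : ℂ) (p : Fin 4 → ℂ) :
    ∑ l : Fin 4,
      (pderiv' l Dpoly p * p 0 - Dpoly p * pderiv' l (fun q => q 0) p) *
        Pcub (b + c) b c l 0 p = 0 := by
  rw [Fin.sum_univ_four]
  simp only [pD0', pD1', pD2', pD3', pC0', pC1', pC2', pC3', Dpoly,
    P00, P10, P20, P30]
  ring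

lemma left1 (b c : ℂ) (p : Fin 4 → ℂ) :
    ∑ l : Fin 4,
      (pderiv' l (Npoly (b + c) b) p * Dpoly p - Npoly (b + c) b p * pderiv' l Dpoly p) *
        Pcub (b + c) b c l 1 p = 0 := by
  rw [Fin.sum_univ_four]
  simp only [pN0', pN1', pN2', pN3', pD0', pD1', pD2', pD3', Npoly, Dpoly,
    P01, P11, P21, P31]
  ring

lemma right1 (b c : ℂ) (p : Fin 4 → ℂ) :
    ∑ l : Fin 4,
      (pderiv' l Dpoly p * p 0 - Dpoly p * pderiv' l (fun q => q 0) p) *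
        Pcub (b + c) b c l 1 p = 0 := by
  rw [Fin.sum_univ_four]
  simp only [pD0', pD1', pD2', pD3', pC0', pC1', pC2', pC3', Dpoly,
    P01, P11, P21, P31]
  ring

lemma left2 (b c : ℂ) (p : Fin 4 → ℂ) :
    ∑ l : Fin 4,
      (pderiv' l (Npoly (b + c) b) p * Dpoly p - Npoly (b + c) b p * pderiv' l Dpoly p) *
        Pcub (b + c) b c l 2 p = 0 := by
  rw [Fin.sum_univ_four]
  simp only [pN0', pN1', pN2', pN3', pD0', pD1', pD2', pD3', Npoly, Dpoly,
    P02, P12, P22, P32]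
  ring

lemma right2 (b c : ℂ) (p : Fin 4 → ℂ) :
    ∑ l : Fin 4,
      (pderiv' l Dpoly p * p 0 - Dpoly p * pderiv' l (fun q => q 0) p) *
        Pcub (b + c) b c l 2 p = 0 := by
  rw [Fin.sum_univ_four]
  simp only [pD0', pD1', pD2', pD3', pC0', pC1', pC2', pC3', Dpoly,
    P02, P12, P22, P32]
  ring

lemma left3 (b c : ℂ) (p : Fin 4 → ℂ) :
    ∑ l : Fin 4,
      (pderiv' l (Npoly (b + c) b) p * Dpoly p - Npoly (b + c) b p * pderiv' l Dpoly p) *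
        Pcub (b + c) b c l 3 p = 0 := by
  rw [Fin.sum_univ_four]
  simp only [pN0', pN1', pN2', pN3', pD0', pD1', pD2', pD3', Npoly, Dpoly,
    P03, P13, P23, P33]
  ring

lemma right3 (b c : ℂ) (p : Fin 4 → ℂ) :
    ∑ l : Fin 4,
      (pderiv' l Dpoly p * p 0 - Dpoly p * pderiv' l (fun q => q 0) p) *
        Pcub (b + c) b c l 3 p = 0 := by
  rw [Fin.sum_univ_four]
  simp only [pD0', pD1', pD2', pD3', pC0', pC1', pC2', pC3', Dpoly,
    P03, P13, P23, P33]
  ring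

/-- for `a = b + c`, the rational functions `N/D` and `D/s₀` are
Casimirs of the cubic Sklyanin bracket on ℂ⁴, in the cleared-denominator sense. -/
theorem statement16 (a b c : ℂ) (habc : a = b + c) :
    ∀ (i : Fin 4) (p : Fin 4 → ℂ),
      (∑ l : Fin 4,
        (pderiv' l (Npoly a b) p * Dpoly p - Npoly a b p * pderiv' l Dpoly p) *
          Pcub a b c l i p = 0) ∧
      (∑ l : Fin 4,
        (pderiv' l Dpoly p * p 0 - Dpoly p * pderiv' l (fun q => q 0) p) *
          Pcub a b c l i p = 0) := by
  subst habc
  intro i p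
  fin_cases i
  · exact ⟨left0 b c p, right0 b c p⟩
  · exact ⟨left1 b c p, right1 b c p⟩
  · exact ⟨left2 b c p, right2 b c p⟩
  · exact ⟨left3 b c p, right3 b c p⟩

end
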